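/- arXiv:1403.1757 — 3 statements merged into one kernel-verified Lean document; each statement's English description precedes it below -/
import Mathlib

section
/- Consider a function G: ℕ → ℝ such that lim_{k→∞} G(k)/k = 0 and G(n) ≥ 0 for all but finitely many n. Then 2G(n) − G(2n) ≥ 0 holds for infinitely many n. -/
open Filter

/-- If `G : ℕ → ℝ` satisfies `lim_k G(k)/k = 0` and `G(n) ≥ 0` for all but
finitely many `n`, then `2 G(n) - G(2n) ≥ 0` for infinitely many `n`. -/
theorem excess_bounding (G : ℕ → ℝ)
    (hlim : Tendsto (fun k : ℕ => G k / k) atTop (nhds 0))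
    (hpos : ∀ᶠ n in atTop, 0 ≤ G n) :
    ∃ᶠ n in atTop, 0 ≤ 2 * G n - G (2 * n) := by
  by_contra hcon
  rw [not_frequently] at hcon
  have h' : ∀ᶠ n in atTop, 2 * G n < G (2 * n) :=
    hcon.mono (fun n hn => by push_neg at hn; linarith)
  obtain ⟨N, hN⟩ := eventually_atTop.1 (h'.and hpos)
  set m : ℕ := 2 * (N + 1) with hm
  have hmN : N ≤ m := by omega
  have hmpos : 0 < m := by omega
  have hGm : 0 < G m := by
    obtain ⟨h1, h2⟩ := hN (N + 1) (by omega)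
    linarith
  have key : ∀ k : ℕ, (2 : ℝ) ^ k * G m ≤ G (2 ^ k * m) := by
    intro k
    induction k with
    | zero => simp
    | succ k ih =>
      have hge : N ≤ 2 ^ k * m := le_trans hmN (Nat.le_mul_of_pos_left m (Nat.pow_pos (n := k) (by norm_num)))
      obtain ⟨h1, _⟩ := hN (2 ^ k * m) hge
      have : (2 : ℕ) ^ (k + 1) * m = 2 * (2 ^ k * m) := by ring
      rw [this]
      calc (2 : ℝ) ^ (k + 1) * G m = 2 * ((2:ℝ)^k * G m) := by ring
      _ ≤ 2 * G (2 ^ k * m) := by linarith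
      _ ≤ G (2 * (2 ^ k * m)) := h1.le
  have htend : Tendsto (fun k : ℕ => 2 ^ k * m) atTop atTop := by
    apply tendsto_atTop_mono (fun k => ?_) tendsto_id
    calc (id k : ℕ) = k := rfl
    _ ≤ 2 ^ k := Nat.le_of_lt (Nat.lt_two_pow_self (n := k))
    _ ≤ 2 ^ k * m := Nat.le_mul_of_pos_right _ hmpos
  have hsub : Tendsto (fun k : ℕ => G (2 ^ k * m) / (2 ^ k * m : ℕ)) atTop (nhds 0) :=
    hlim.comp htend
  have hpos' : (0 : ℝ) < G m / m := div_pos hGm (by exact_mod_cast hmpos)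
  obtain ⟨k, hk⟩ := (hsub.eventually (gt_mem_nhds hpos')).exists
  have hcast : ((2 ^ k * m : ℕ) : ℝ) = (2:ℝ)^k * m := by push_cast; ring
  have hle : G m / m ≤ G (2 ^ k * m) / (2 ^ k * m : ℕ) := by
    rw [hcast]
    have h2k : (0:ℝ) < (2:ℝ)^k := by positivity
    have hmr : (0:ℝ) < (m:ℝ) := by exact_mod_cast hmpos
    rw [show G m / m = (2:ℝ)^k * G m / ((2:ℝ)^k * m) by rw [mul_div_mul_left _ _ (ne_of_gt h2k)]]
    gcongr
    exact key k
  exact absurd hk (not_lt.mpr hle)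
end

section
/- Let P be a code over a stationary measure Q such that I^P is nearly nondecreasing. Then the Hilberg exponents can be computed along dyadic block lengths: γ⁺_P = limsup_{k→∞} log⁺(I^P(2^k))/log 2^k, γ⁻_P = liminf_{k→∞} log⁺(I^P(2^k))/log 2^k, δ⁺_P = limsup_{k→∞} log⁺(E_Q I^P(2^k))/log 2^k, and δ⁻_P = liminf_{k→∞} log⁺(E_Q I^P(2^k))/log 2^k. -/
open MeasureTheory ProbabilityTheory Filter

noncomputable section

/-- The binary positive logarithm `log⁺ x`: `log(x+1)` for `x ≥ 0` and `0` for `x < 0`. -/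
def logPlus (x : ℝ) : ℝ := if 0 ≤ x then Real.logb 2 (x + 1) else 0

private lemma logPlus_nonneg (x : ℝ) : 0 ≤ logPlus x := by
  unfold logPlus
  split_ifs with h
  · exact Real.logb_nonneg one_lt_two (by linarith)
  · exact le_refl 0

private lemma logPlus_mono {x y : ℝ} (h : x ≤ y) : logPlus x ≤ logPlus y := by
  unfold logPlus
  split_ifs with hx hy hy
  · exact (Real.logb_le_logb one_lt_two (by linarith) (by linarith [hx.trans h])).2 (by linarith)
  · exact absurd (hx.trans h) hy
  · exact Real.logb_nonneg one_lt_two (by linarith)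
  · exact le_refl 0

private lemma logPlus_add_le (x d : ℝ) (hd : 0 ≤ d) :
    logPlus (x + d) ≤ logPlus x + logPlus d := by
  by_cases hx : 0 ≤ x
  · have h1 : logPlus (x + d) = Real.logb 2 (x + d + 1) := by
      unfold logPlus; rw [if_pos (by linarith)]
    have h2 : logPlus x = Real.logb 2 (x + 1) := by unfold logPlus; rw [if_pos hx]
    have h3 : logPlus d = Real.logb 2 (d + 1) := by unfold logPlus; rw [if_pos hd]
    rw [h1, h2, h3, ← Real.logb_mul (by linarith) (by linarith)]
    exact (Real.logb_le_logb one_lt_two (by linarith) (by nlinarith)).2 (by nlinarith)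
  · have : logPlus (x + d) ≤ logPlus d := logPlus_mono (by linarith)
    have hx0 : logPlus x = 0 := by unfold logPlus; rw [if_neg hx]
    linarith

private lemma exists_dyadic_index {K n : ℕ} (hK : 1 ≤ K) (hn : 2 ^ K ≤ n) :
    ∃ k, K ≤ k ∧ 2 ^ k ≤ n ∧ n ≤ 2 ^ (k + 1) := by
  have hn0 : n ≠ 0 := by
    have : 0 < 2 ^ K := by positivity
    omega
  exact ⟨Nat.log 2 n, (Nat.le_log_iff_pow_le one_lt_two hn0).2 hn,
    Nat.pow_log_le_self 2 hn0, (Nat.lt_pow_succ_log_self one_lt_two n).le⟩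

private lemma dyadic_limsup_liminf (a c : ℕ → ℝ) (ha : ∀ n, 0 ≤ a n)
    (hc0 : ∀ k, 0 ≤ c k) (hc : Tendsto c atTop (nhds 0)) (K : ℕ) (hK : 1 ≤ K)
    (h1 : ∀ k n : ℕ, K ≤ k → 2 ^ k ≤ n → n ≤ 2 ^ (k + 1) →
      a n ≤ a (2 ^ (k + 1)) * (1 + 1 / (k : ℝ)) + c k)
    (h2 : ∀ k n : ℕ, K ≤ k → 2 ^ k ≤ n → n ≤ 2 ^ (k + 1) →
      a (2 ^ k) ≤ a n * (1 + 1 / (k : ℝ)) + c k) :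
    limsup a atTop = limsup (fun k => a (2 ^ k)) atTop ∧
      liminf a atTop = liminf (fun k => a (2 ^ k)) atTop := by
  have hsubseq : ∀ (p : ℕ → Prop), (∀ᶠ n in atTop, p n) → ∀ᶠ k in atTop, p (2 ^ k) := by
    intro p hp
    obtain ⟨N, hN⟩ := eventually_atTop.1 hp
    exact eventually_atTop.2 ⟨N, fun k hk => hN _ (hk.trans (Nat.lt_two_pow_self (n := k)).le)⟩
  -- "up" : eventual upper bounds for the dyadic sequence give eventual upper bounds for a
  have up : ∀ ε : ℝ, 0 < ε → ∀ x : ℝ, (∀ᶠ k in atTop, a (2 ^ k) ≤ x) →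
      ∀ᶠ n in atTop, a n ≤ x + ε := by
    intro ε hε x hx
    obtain ⟨N, hN⟩ := eventually_atTop.1 hx
    have hx0 : 0 ≤ x := le_trans (ha (2 ^ N)) (hN N le_rfl)
    obtain ⟨k₂, hk₂⟩ := exists_nat_gt (2 * x / ε)
    obtain ⟨k₃, hk₃⟩ := eventually_atTop.1
      (hc.eventually (gt_mem_nhds (show (0:ℝ) < ε / 2 by linarith)))
    set k₁ := max (max K N) (max k₂ k₃) with hk₁def
    have hk₁K : K ≤ k₁ := le_max_of_le_left (le_max_left _ _)
    refine eventually_atTop.2 ⟨2 ^ k₁, fun n hn => ?_⟩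
    obtain ⟨k, hkk₁, hkn, hnk⟩ := exists_dyadic_index (hK.trans hk₁K) hn
    have hKk : K ≤ k := hk₁K.trans hkk₁
    have hk1 : 1 ≤ k := hK.trans hKk
    have hkpos : (0:ℝ) < k := by exact_mod_cast hk1
    have hb : a (2 ^ (k + 1)) ≤ x := hN _ (by
      have : N ≤ k₁ := le_max_of_le_left (le_max_right _ _); omega)
    have hck : c k < ε / 2 := hk₃ k (by
      have : k₃ ≤ k₁ := le_max_of_le_right (le_max_right _ _); omega)
    have hxk : x / k < ε / 2 := by
      have hkk₂ : (k₂ : ℝ) ≤ k := by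
        have : k₂ ≤ k₁ := le_max_of_le_right (le_max_left _ _)
        exact_mod_cast le_trans this hkk₁
      have h2x : 2 * x < k₂ * ε := by
        rw [div_lt_iff₀ hε] at hk₂; linarith
      rw [div_lt_iff₀ hkpos]
      nlinarith
    have h1' := h1 k n hKk hkn hnk
    have hstep : a (2 ^ (k + 1)) * (1 + 1 / (k:ℝ)) ≤ x * (1 + 1 / (k:ℝ)) :=
      mul_le_mul_of_nonneg_right hb (by positivity)
    have hxx : x * (1 + 1 / (k:ℝ)) = x + x / k := by field_simp
    linarith
  -- "down" : eventual lower bounds for the dyadic sequence give eventual lower bounds for a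
  have down : ∀ ε : ℝ, 0 < ε → ∀ x : ℝ, (∀ᶠ k in atTop, x ≤ a (2 ^ k)) →
      ∀ᶠ n in atTop, x - ε ≤ a n := by
    intro ε hε x hx
    by_cases hx0 : x ≤ 0
    · exact Eventually.of_forall fun n => le_trans (by linarith) (ha n)
    push_neg at hx0
    obtain ⟨N, hN⟩ := eventually_atTop.1 hx
    obtain ⟨k₂, hk₂⟩ := exists_nat_gt (2 * x / ε)
    obtain ⟨k₃, hk₃⟩ := eventually_atTop.1
      (hc.eventually (gt_mem_nhds (show (0:ℝ) < ε / 2 by linarith)))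
    set k₁ := max (max K N) (max k₂ k₃) with hk₁def
    have hk₁K : K ≤ k₁ := le_max_of_le_left (le_max_left _ _)
    refine eventually_atTop.2 ⟨2 ^ k₁, fun n hn => ?_⟩
    obtain ⟨k, hkk₁, hkn, hnk⟩ := exists_dyadic_index (hK.trans hk₁K) hn
    have hKk : K ≤ k := hk₁K.trans hkk₁
    have hk1 : 1 ≤ k := hK.trans hKk
    have hkpos : (0:ℝ) < k := by exact_mod_cast hk1
    have hbk : x ≤ a (2 ^ k) := hN _ (by
      have : N ≤ k₁ := le_max_of_le_left (le_max_right _ _); omega)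
    have hck : c k < ε / 2 := hk₃ k (by
      have : k₃ ≤ k₁ := le_max_of_le_right (le_max_right _ _); omega)
    have hxk : x / k < ε / 2 := by
      have hkk₂ : (k₂ : ℝ) ≤ k := by
        have : k₂ ≤ k₁ := le_max_of_le_right (le_max_left _ _)
        exact_mod_cast le_trans this hkk₁
      have h2x : 2 * x < k₂ * ε := by
        rw [div_lt_iff₀ hε] at hk₂; linarith
      rw [div_lt_iff₀ hkpos]
      nlinarith
    have h2' := h2 k n hKk hkn hnk
    -- x ≤ a n * (1 + 1/k) + c k
    have hx' : x ≤ a n * (1 + 1 / (k:ℝ)) + c k := hbk.trans h2'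
    rcases le_or_gt x (a n) with h | h
    · linarith
    · have han : 0 ≤ a n := ha n
      have : a n * (1 / (k:ℝ)) ≤ x * (1 / (k:ℝ)) :=
        mul_le_mul_of_nonneg_right h.le (by positivity)
      have hxx : x * (1 / (k:ℝ)) = x / k := by ring
      nlinarith
  constructor
  · rw [limsup_eq, limsup_eq]
    set S := {x : ℝ | ∀ᶠ n in atTop, a n ≤ x} with hSdef
    set T := {x : ℝ | ∀ᶠ k in atTop, a (2 ^ k) ≤ x} with hTdef
    have hST : S ⊆ T := fun x hx => hsubseq _ hx
    have hTnn : ∀ x ∈ T, (0:ℝ) ≤ x := by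
      intro x hx
      obtain ⟨N, hN⟩ := eventually_atTop.1 hx
      exact (ha _).trans (hN N le_rfl)
    by_cases hT : T.Nonempty
    · have hS : S.Nonempty := by
        obtain ⟨x, hx⟩ := hT
        exact ⟨x + 1, up 1 one_pos x hx⟩
      refine le_antisymm ?_ (csInf_le_csInf ⟨0, hTnn⟩ hS hST)
      refine le_of_forall_pos_le_add fun ε hε => ?_
      obtain ⟨x, hxT, hxlt⟩ := Real.lt_sInf_add_pos hT (half_pos hε)
      have hmem : x + ε / 2 ∈ S := up (ε / 2) (half_pos hε) x hxT
      have : sInf S ≤ x + ε / 2 := csInf_le ⟨0, fun y hy => hTnn y (hST hy)⟩ hmem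
      linarith
    · have hS : ¬ S.Nonempty := fun h => hT ⟨h.choose, hST h.choose_spec⟩
      rw [Set.not_nonempty_iff_eq_empty] at hT hS
      rw [hS, hT]
  · rw [liminf_eq, liminf_eq]
    set S := {x : ℝ | ∀ᶠ n in atTop, x ≤ a n} with hSdef
    set T := {x : ℝ | ∀ᶠ k in atTop, x ≤ a (2 ^ k)} with hTdef
    have hST : S ⊆ T := fun x hx => hsubseq _ hx
    have hS0 : (0:ℝ) ∈ S := Eventually.of_forall ha
    by_cases hT : BddAbove T
    · have hSb : BddAbove S := hT.mono hST
      refine le_antisymm (csSup_le_csSup hT ⟨0, hS0⟩ hST) ?_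
      refine le_of_forall_pos_le_add fun ε hε => ?_
      obtain ⟨x, hxT, hxlt⟩ := exists_lt_of_lt_csSup ⟨0, hST hS0⟩
        (show sSup T - ε / 2 < sSup T by linarith)
      have hmem : x - ε / 2 ∈ S := down (ε / 2) (half_pos hε) x hxT
      have : x - ε / 2 ≤ sSup S := le_csSup hSb hmem
      linarith
    · have hSu : ¬ BddAbove S := by
        rw [not_bddAbove_iff] at hT ⊢
        intro M
        obtain ⟨x, hxT, hMx⟩ := hT (M + 1)
        exact ⟨x - 1, down 1 one_pos x hxT, by linarith⟩
      rw [Real.sSup_of_not_bddAbove hT, Real.sSup_of_not_bddAbove hSu]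

private lemma logb2_nat_nonneg (n : ℕ) : 0 ≤ Real.logb 2 (n : ℝ) := by
  rcases Nat.eq_zero_or_pos n with h | h
  · simp [h]
  · exact Real.logb_nonneg one_lt_two (by exact_mod_cast h)

private lemma logb2_nat_mono {m M : ℕ} (hm : 1 ≤ m) (hmM : m ≤ M) :
    Real.logb 2 (m : ℝ) ≤ Real.logb 2 (M : ℝ) := by
  refine (Real.logb_le_logb one_lt_two ?_ ?_).2 (by exact_mod_cast hmM)
  · exact_mod_cast hm
  · exact_mod_cast hm.trans hmM

private lemma logb2_two_pow (k : ℕ) : Real.logb 2 (((2 : ℕ) ^ k : ℕ) : ℝ) = k := by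
  rw [show (((2:ℕ) ^ k : ℕ) : ℝ) = (2:ℝ) ^ k by push_cast; ring, Real.logb_pow,
    Real.logb_self_eq_one one_lt_two, mul_one]

private lemma core_dyadic (I : ℕ → ℝ) (C : ℝ) (hC : 0 ≤ C) (K : ℕ) (hK : 1 ≤ K)
    (hA : ∀ k n : ℕ, K ≤ k → 2 ^ k ≤ n → n ≤ 2 ^ (k + 1) → I (2 ^ k) ≤ I n + (4 * k + C))
    (hB : ∀ k n : ℕ, K ≤ k → 2 ^ k ≤ n → n ≤ 2 ^ (k + 1) → I n ≤ I (2 ^ (k + 1)) + (4 * k + C)) :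
    limsup (fun n : ℕ => logPlus (I n) / Real.logb 2 n) atTop
      = limsup (fun k : ℕ => logPlus (I (2 ^ k)) / Real.logb 2 ((2 : ℝ) ^ k)) atTop ∧
    liminf (fun n : ℕ => logPlus (I n) / Real.logb 2 n) atTop
      = liminf (fun k : ℕ => logPlus (I (2 ^ k)) / Real.logb 2 ((2 : ℝ) ^ k)) atTop := by
  set a : ℕ → ℝ := fun n => logPlus (I n) / Real.logb 2 n with hadef
  set c : ℕ → ℝ := fun k => logPlus (4 * k + C) / k with hcdef
  have hbfun : (fun k : ℕ => logPlus (I (2 ^ k)) / Real.logb 2 ((2 : ℝ) ^ k))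
      = fun k : ℕ => a (2 ^ k) := by
    funext k
    have := logb2_two_pow k
    simp only [hadef]
    rw [show (((2:ℕ) ^ k : ℕ) : ℝ) = (2:ℝ) ^ k by push_cast; ring]
  have ha : ∀ n, 0 ≤ a n := fun n => div_nonneg (logPlus_nonneg _) (logb2_nat_nonneg n)
  have hc0 : ∀ k, 0 ≤ c k := fun k => div_nonneg (logPlus_nonneg _) (Nat.cast_nonneg k)
  have hcval : ∀ k : ℕ, c k = Real.log (4 * k + C + 1) / Real.log 2 / k := by
    intro k
    have h4 : (0:ℝ) ≤ 4 * k + C := by positivity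
    simp only [hcdef, logPlus, if_pos h4, Real.logb]
  have hctend : Tendsto c atTop (nhds 0) := by
    have t1 : Tendsto (fun k : ℕ => 4 * (k:ℝ) + C + 1) atTop atTop := by
      apply tendsto_atTop_add_const_right
      apply tendsto_atTop_add_const_right
      exact (tendsto_natCast_atTop_atTop).const_mul_atTop (by norm_num)
    have t2 : Tendsto (fun k : ℕ => Real.log (4 * (k:ℝ) + C + 1) / (4 * (k:ℝ) + C + 1))
        atTop (nhds 0) :=
      (Real.isLittleO_log_id_atTop.tendsto_div_nhds_zero).comp t1
    have t3 : Tendsto (fun k : ℕ =>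
        Real.log (4 * (k:ℝ) + C + 1) / (4 * (k:ℝ) + C + 1) * ((5 + C) / Real.log 2))
        atTop (nhds 0) := by
      simpa using t2.mul_const ((5 + C) / Real.log 2)
    refine squeeze_zero' (Eventually.of_forall hc0) ?_ t3
    refine eventually_atTop.2 ⟨1, fun k hk => ?_⟩
    rw [hcval k]
    have hk1 : (1:ℝ) ≤ k := by exact_mod_cast hk
    have hy1 : (1:ℝ) ≤ 4 * k + C + 1 := by linarith
    have hlog : (0:ℝ) ≤ Real.log (4 * k + C + 1) := Real.log_nonneg hy1
    have hl2 : (0:ℝ) < Real.log 2 := Real.log_pos one_lt_two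
    rw [div_div, div_mul_div_comm, div_le_div_iff₀ (by positivity) (by positivity)]
    have hyk : 4 * (k:ℝ) + C + 1 ≤ (5 + C) * k := by nlinarith
    nlinarith [mul_le_mul_of_nonneg_left hyk (mul_nonneg hlog hl2.le)]
  have key := dyadic_limsup_liminf a c ha hc0 hctend K hK ?_ ?_
  · rw [hbfun]
    exact key
  · -- h1
    intro k n hKk hkn hnk
    have hk1 : 1 ≤ k := hK.trans hKk
    have hkR : (1:ℝ) ≤ k := by exact_mod_cast hk1
    have hkpos : (0:ℝ) < k := by linarith
    have hlogn_lb : (k:ℝ) ≤ Real.logb 2 n := by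
      rw [← logb2_two_pow k]
      exact logb2_nat_mono Nat.one_le_two_pow hkn
    have hLn : logPlus (I n) ≤ logPlus (I (2 ^ (k + 1))) + logPlus (4 * k + C) :=
      (logPlus_mono (hB k n hKk hkn hnk)).trans (logPlus_add_le _ _ (by positivity))
    have step1 : a n ≤ (logPlus (I (2 ^ (k + 1))) + logPlus (4 * k + C)) / k :=
      div_le_div₀ (add_nonneg (logPlus_nonneg _) (logPlus_nonneg _)) hLn hkpos hlogn_lb
    refine step1.trans (le_of_eq ?_)
    have ha2 : a (2 ^ (k + 1)) = logPlus (I (2 ^ (k + 1))) / ((k:ℝ) + 1) := by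
      simp only [hadef]
      rw [logb2_two_pow (k + 1)]
      norm_num
    rw [ha2]
    simp only [hcdef]
    field_simp
  · -- h2
    intro k n hKk hkn hnk
    have hk1 : 1 ≤ k := hK.trans hKk
    have hkR : (1:ℝ) ≤ k := by exact_mod_cast hk1
    have hkpos : (0:ℝ) < k := by linarith
    have hlogn_lb : (k:ℝ) ≤ Real.logb 2 n := by
      rw [← logb2_two_pow k]
      exact logb2_nat_mono Nat.one_le_two_pow hkn
    have hlogn_pos : (0:ℝ) < Real.logb 2 n := lt_of_lt_of_le hkpos hlogn_lb
    have hlogn_ub : Real.logb 2 n ≤ (k:ℝ) + 1 := by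
      have := logb2_nat_mono (le_trans Nat.one_le_two_pow hkn) hnk
      rw [logb2_two_pow (k + 1)] at this
      push_cast at this
      linarith
    have hL2 : logPlus (I (2 ^ k)) ≤ logPlus (I n) + logPlus (4 * k + C) :=
      (logPlus_mono (hA k n hKk hkn hnk)).trans (logPlus_add_le _ _ (by positivity))
    have ha2k : a (2 ^ k) = logPlus (I (2 ^ k)) / (k:ℝ) := by
      simp only [hadef]
      rw [logb2_two_pow k]
    have hLn_eq : logPlus (I n) = a n * Real.logb 2 n := by
      simp only [hadef]
      field_simp
    have hLn_le : logPlus (I n) ≤ a n * ((k:ℝ) + 1) := by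
      rw [hLn_eq]
      exact mul_le_mul_of_nonneg_left hlogn_ub (ha n)
    have step1 : a (2 ^ k) ≤ (a n * ((k:ℝ) + 1) + logPlus (4 * k + C)) / k := by
      rw [ha2k]
      apply div_le_div_of_nonneg_right ?_ hkpos.le
      · linarith
    refine step1.trans (le_of_eq ?_)
    simp only [hcdef]
    field_simp

variable {𝕏 : Type*}

/-- The left shift on two-sided sequences. -/
def shift (ω : ℤ → 𝕏) : ℤ → 𝕏 := fun i => ω (i + 1)

/-- The block `X_{-n+1}^0` of a two-sided sequence. -/
def blockNeg (n : ℕ) (ω : ℤ → 𝕏) : Fin n → 𝕏 := fun i => ω (-(n : ℤ) + 1 + (i : ℕ))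

/-- The block `X_1^n` of a two-sided sequence. -/
def blockPos (n : ℕ) (ω : ℤ → 𝕏) : Fin n → 𝕏 := fun i => ω (1 + (i : ℕ))

/-- The block `X_{-n+1}^n` of a two-sided sequence. -/
def blockBoth (n : ℕ) (ω : ℤ → 𝕏) : Fin (2 * n) → 𝕏 := fun i => ω (-(n : ℤ) + 1 + (i : ℕ))

/-- A code assigns nonnegative values to finite strings. -/
def CodeNonneg (P : (n : ℕ) → (Fin n → 𝕏) → ℝ) : Prop := ∀ n x, 0 ≤ P n x

/-- A code satisfies the Kraft inequality `∑_{x_1^n} P(x_1^n) ≤ 1`. -/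
def CodeKraft (P : (n : ℕ) → (Fin n → 𝕏) → ℝ) : Prop :=
  ∀ n, 1 ≤ n → ∑' x : Fin n → 𝕏, P n x ≤ 1

/-- The pointwise mutual information
`I^P(n) = -log P(X_{-n+1}^0) - log P(X_1^n) + log P(X_{-n+1}^n)` (binary logarithm). -/
def pmi (P : (n : ℕ) → (Fin n → 𝕏) → ℝ) (n : ℕ) (ω : ℤ → 𝕏) : ℝ :=
  -Real.logb 2 (P n (blockNeg n ω)) - Real.logb 2 (P n (blockPos n ω))
    + Real.logb 2 (P (2 * n) (blockBoth n ω))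

/-- The upper random Hilberg exponent `γ⁺_P = limsup_n log⁺ I^P(n) / log n`. -/
def gammaPlus (P : (n : ℕ) → (Fin n → 𝕏) → ℝ) (ω : ℤ → 𝕏) : ℝ :=
  limsup (fun n : ℕ => logPlus (pmi P n ω) / Real.logb 2 n) atTop

/-- The lower random Hilberg exponent `γ⁻_P = liminf_n log⁺ I^P(n) / log n`. -/
def gammaMinus (P : (n : ℕ) → (Fin n → 𝕏) → ℝ) (ω : ℤ → 𝕏) : ℝ :=
  liminf (fun n : ℕ => logPlus (pmi P n ω) / Real.logb 2 n) atTop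

variable [MeasurableSpace 𝕏]

/-- The upper expected Hilberg exponent `δ⁺_P = limsup_n log⁺ E_Q I^P(n) / log n`. -/
def deltaPlus (Q : Measure (ℤ → 𝕏)) (P : (n : ℕ) → (Fin n → 𝕏) → ℝ) : ℝ :=
  limsup (fun n : ℕ => logPlus (∫ ω, pmi P n ω ∂Q) / Real.logb 2 n) atTop

/-- The lower expected Hilberg exponent `δ⁻_P = liminf_n log⁺ E_Q I^P(n) / log n`. -/
def deltaMinus (Q : Measure (ℤ → 𝕏)) (P : (n : ℕ) → (Fin n → 𝕏) → ℝ) : ℝ :=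
  liminf (fun n : ℕ => logPlus (∫ ω, pmi P n ω ∂Q) / Real.logb 2 n) atTop

/-- The measure `Q` regarded as a code: `Q(x_1^n) = Q(X_1^n = x_1^n)`. -/
def measureCode (Q : Measure (ℤ → 𝕏)) : (n : ℕ) → (Fin n → 𝕏) → ℝ :=
  fun n x => (Q {ω | blockPos n ω = x}).toReal

/-- The upper inverse expected Hilberg exponent
`ζ⁺_P = limsup_n log⁺ [E_Q (I^P(n)+B)⁻¹]⁻¹ / log n`, for a constant `B`. -/
def zetaPlus (Q : Measure (ℤ → 𝕏)) (P : (n : ℕ) → (Fin n → 𝕏) → ℝ) (B : ℝ) : ℝ :=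
  limsup (fun n : ℕ => logPlus ((∫ ω, (pmi P n ω + B)⁻¹ ∂Q)⁻¹) / Real.logb 2 n) atTop

/-- The lower inverse expected Hilberg exponent
`ζ⁻_P = liminf_n log⁺ [E_Q (I^P(n)+B)⁻¹]⁻¹ / log n`, for a constant `B`. -/
def zetaMinus (Q : Measure (ℤ → 𝕏)) (P : (n : ℕ) → (Fin n → 𝕏) → ℝ) (B : ℝ) : ℝ :=
  liminf (fun n : ℕ => logPlus ((∫ ω, (pmi P n ω + B)⁻¹ ∂Q)⁻¹) / Real.logb 2 n) atTop

/-- The parameter `ε_P = limsup_n log⁺ [Var_Q I^P(n) / E_Q I^P(n)] / log n`. -/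
def epsilonExp (Q : Measure (ℤ → 𝕏)) (P : (n : ℕ) → (Fin n → 𝕏) → ℝ) : ℝ :=
  limsup (fun n : ℕ =>
    logPlus (variance (pmi P n) Q / ∫ ω, pmi P n ω ∂Q) / Real.logb 2 n) atTop

/-- `I^P` is nearly nondecreasing: for some `C ≥ 0`,
`I^P(n+m) ≥ I^P(n) - 4 log m - C` pointwise for all `n, m ≥ 1`. -/
def NearlyNondecreasing (P : (n : ℕ) → (Fin n → 𝕏) → ℝ) : Prop :=
  ∃ C : ℝ, 0 ≤ C ∧ ∀ n m : ℕ, 1 ≤ n → 1 ≤ m → ∀ ω : ℤ → 𝕏,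
    pmi P n ω - 4 * Real.logb 2 m - C ≤ pmi P (n + m) ω


private lemma measurable_pmi [Countable 𝕏] [MeasurableSingletonClass 𝕏]
    (P : (n : ℕ) → (Fin n → 𝕏) → ℝ) (n : ℕ) : Measurable (pmi P n) := by
  have hlogb : Measurable fun x : ℝ => Real.logb 2 x := Real.measurable_log.div_const _
  have h1 : Measurable (blockNeg n : (ℤ → 𝕏) → Fin n → 𝕏) :=
    measurable_pi_lambda _ fun i => measurable_pi_apply _
  have h2 : Measurable (blockPos n : (ℤ → 𝕏) → Fin n → 𝕏) :=
    measurable_pi_lambda _ fun i => measurable_pi_apply _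
  have h3 : Measurable (blockBoth n : (ℤ → 𝕏) → Fin (2 * n) → 𝕏) :=
    measurable_pi_lambda _ fun i => measurable_pi_apply _
  unfold pmi
  exact ((hlogb.comp ((measurable_of_countable _).comp h1)).neg.sub
    (hlogb.comp ((measurable_of_countable _).comp h2))).add
    (hlogb.comp ((measurable_of_countable _).comp h3))

/-- If `I^P` is nearly nondecreasing, then all four Hilberg exponents can
be computed along the dyadic subsequence of block lengths. -/
theorem hilberg_exponents_dyadic {𝕏 : Type*} [Countable 𝕏] [MeasurableSpace 𝕏]
    [MeasurableSingletonClass 𝕏] (Q : Measure (ℤ → 𝕏)) [IsProbabilityMeasure Q]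
    (hstat : MeasurePreserving shift Q Q)
    (P : (n : ℕ) → (Fin n → 𝕏) → ℝ) (hP1 : CodeNonneg P) (hP2 : CodeKraft P)
    (hnd : NearlyNondecreasing P) :
    (∀ ω : ℤ → 𝕏, gammaPlus P ω =
      limsup (fun k : ℕ => logPlus (pmi P (2 ^ k) ω) / Real.logb 2 (2 ^ k)) atTop) ∧
    (∀ ω : ℤ → 𝕏, gammaMinus P ω =
      liminf (fun k : ℕ => logPlus (pmi P (2 ^ k) ω) / Real.logb 2 (2 ^ k)) atTop) ∧
    deltaPlus Q P =
      limsup (fun k : ℕ => logPlus (∫ ω, pmi P (2 ^ k) ω ∂Q) / Real.logb 2 (2 ^ k)) atTop ∧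
    deltaMinus Q P =
      liminf (fun k : ℕ => logPlus (∫ ω, pmi P (2 ^ k) ω ∂Q) / Real.logb 2 (2 ^ k)) atTop := by
  obtain ⟨C, hC0, hC⟩ := hnd
  -- pointwise claims
  have claimA : ∀ (k n : ℕ), 1 ≤ k → 2 ^ k ≤ n → n ≤ 2 ^ (k + 1) → ∀ ω : ℤ → 𝕏,
      pmi P (2 ^ k) ω ≤ pmi P n ω + (4 * k + C) := by
    intro k n hk hkn hnk ω
    rcases eq_or_lt_of_le hkn with h | h
    · rw [← h]
      have h4 : (0:ℝ) ≤ 4 * k + C := by positivity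
      linarith
    · set m := n - 2 ^ k with hm
      have hm1 : 1 ≤ m := by omega
      have hsum : 2 ^ k + m = n := by omega
      have hmain := hC (2 ^ k) m Nat.one_le_two_pow hm1 ω
      rw [hsum] at hmain
      have hmlt : m ≤ 2 ^ k := by
        have : 2 ^ (k + 1) = 2 ^ k + 2 ^ k := by ring
        omega
      have hlb : Real.logb 2 (m : ℝ) ≤ (k : ℝ) := by
        rw [← logb2_two_pow k]; exact logb2_nat_mono hm1 hmlt
      linarith
  have claimB : ∀ (k n : ℕ), 1 ≤ k → 2 ^ k ≤ n → n ≤ 2 ^ (k + 1) → ∀ ω : ℤ → 𝕏,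
      pmi P n ω ≤ pmi P (2 ^ (k + 1)) ω + (4 * k + C) := by
    intro k n hk hkn hnk ω
    rcases eq_or_lt_of_le hnk with h | h
    · rw [h]
      have h4 : (0:ℝ) ≤ 4 * k + C := by positivity
      linarith
    · set m := 2 ^ (k + 1) - n with hm
      have hpow : 2 ^ (k + 1) = 2 ^ k + 2 ^ k := by ring
      have hm1 : 1 ≤ m := by omega
      have hsum : n + m = 2 ^ (k + 1) := by omega
      have hn1 : 1 ≤ n := le_trans Nat.one_le_two_pow hkn
      have hmain := hC n m hn1 hm1 ω
      rw [hsum] at hmain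
      have hmlt : m ≤ 2 ^ k := by omega
      have hlb : Real.logb 2 (m : ℝ) ≤ (k : ℝ) := by
        rw [← logb2_two_pow k]; exact logb2_nat_mono hm1 hmlt
      linarith
  -- gamma parts
  have hgamma : ∀ ω : ℤ → 𝕏,
      (gammaPlus P ω =
        limsup (fun k : ℕ => logPlus (pmi P (2 ^ k) ω) / Real.logb 2 (2 ^ k)) atTop) ∧
      (gammaMinus P ω =
        liminf (fun k : ℕ => logPlus (pmi P (2 ^ k) ω) / Real.logb 2 (2 ^ k)) atTop) := by
    intro ω
    exact core_dyadic (fun n => pmi P n ω) C hC0 1 le_rfl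
      (fun k n hk h1 h2 => claimA k n hk h1 h2 ω)
      (fun k n hk h1 h2 => claimB k n hk h1 h2 ω)
  -- delta parts
  have hdelta :
      (deltaPlus Q P =
        limsup (fun k : ℕ => logPlus (∫ ω, pmi P (2 ^ k) ω ∂Q) / Real.logb 2 (2 ^ k)) atTop) ∧
      (deltaMinus Q P =
        liminf (fun k : ℕ => logPlus (∫ ω, pmi P (2 ^ k) ω ∂Q) / Real.logb 2 (2 ^ k)) atTop) := by
    by_cases hcof : ∀ N : ℕ, ∃ n, N ≤ n ∧ Integrable (pmi P n) Q
    · obtain ⟨n₀, hn₀1, hn₀⟩ := hcof 1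
      have hall : ∀ n, n₀ ≤ n → Integrable (pmi P n) Q := by
        intro n hn
        rcases eq_or_lt_of_le hn with h | h
        · rwa [← h]
        obtain ⟨M, hM, hMint⟩ := hcof (n + 1)
        have hMn : n < M := hM
        have low : ∀ ω, pmi P n₀ ω - 4 * Real.logb 2 ((n - n₀ : ℕ) : ℝ) - C ≤ pmi P n ω := by
          intro ω
          have := hC n₀ (n - n₀) hn₀1 (by omega) ω
          rwa [show n₀ + (n - n₀) = n by omega] at this
        have high : ∀ ω, pmi P n ω ≤ pmi P M ω + (4 * Real.logb 2 ((M - n : ℕ) : ℝ) + C) := by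
          intro ω
          have := hC n (M - n) (by omega) (by omega) ω
          rw [show n + (M - n) = M by omega] at this
          linarith
        refine ((hn₀.abs.add hMint.abs).add
          (integrable_const (4 * Real.logb 2 (M : ℝ) + C))).mono'
          (measurable_pmi P n).aestronglyMeasurable (Eventually.of_forall fun ω => ?_)
        have hb1 : Real.logb 2 ((n - n₀ : ℕ) : ℝ) ≤ Real.logb 2 (M : ℝ) :=
          logb2_nat_mono (by omega) (by omega)
        have hb2 : Real.logb 2 ((M - n : ℕ) : ℝ) ≤ Real.logb 2 (M : ℝ) :=
          logb2_nat_mono (by omega) (by omega)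
        rw [Real.norm_eq_abs, abs_le]
        constructor
        · have := low ω
          have h1 := neg_abs_le (pmi P n₀ ω)
          have h2 := abs_nonneg (pmi P M ω)
          simp only [Pi.add_apply, Pi.abs_apply]
          linarith
        · have := high ω
          have h1 := le_abs_self (pmi P M ω)
          have h2 := abs_nonneg (pmi P n₀ ω)
          simp only [Pi.add_apply, Pi.abs_apply]
          linarith
      have hint : ∀ k n : ℕ, n₀ ≤ k → 2 ^ k ≤ n → n ≤ 2 ^ (k + 1) →
          Integrable (pmi P n) Q ∧ Integrable (pmi P (2 ^ k)) Q ∧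
            Integrable (pmi P (2 ^ (k + 1))) Q := by
        intro k n hk hkn hnk
        have hk2 : n₀ ≤ 2 ^ k := le_trans hk (le_trans (Nat.lt_two_pow_self (n := k)).le le_rfl)
        exact ⟨hall n (le_trans hk2 hkn), hall _ hk2,
          hall _ (le_trans hk2 (Nat.pow_le_pow_right (by norm_num) (by omega)))⟩
      have hJA : ∀ k n : ℕ, n₀ ≤ k → 2 ^ k ≤ n → n ≤ 2 ^ (k + 1) →
          (∫ ω, pmi P (2 ^ k) ω ∂Q) ≤ (∫ ω, pmi P n ω ∂Q) + (4 * k + C) := by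
        intro k n hk hkn hnk
        obtain ⟨i2, i1, _⟩ := hint k n hk hkn hnk
        have := integral_mono i1 (i2.add (integrable_const (4 * (k:ℝ) + C)))
          (fun ω => claimA k n (le_trans hn₀1 hk) hkn hnk ω)
        simp only [Pi.add_apply] at this
        rwa [integral_add i2 (integrable_const _), integral_const, probReal_univ,
          one_smul] at this
      have hJB : ∀ k n : ℕ, n₀ ≤ k → 2 ^ k ≤ n → n ≤ 2 ^ (k + 1) →
          (∫ ω, pmi P n ω ∂Q) ≤ (∫ ω, pmi P (2 ^ (k + 1)) ω ∂Q) + (4 * k + C) := by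
        intro k n hk hkn hnk
        obtain ⟨i1, _, i2⟩ := hint k n hk hkn hnk
        have := integral_mono i1 (i2.add (integrable_const (4 * (k:ℝ) + C)))
          (fun ω => claimB k n (le_trans hn₀1 hk) hkn hnk ω)
        simp only [Pi.add_apply] at this
        rwa [integral_add i2 (integrable_const _), integral_const, probReal_univ,
          one_smul] at this
      exact core_dyadic (fun n => ∫ ω, pmi P n ω ∂Q) C hC0 n₀ hn₀1 hJA hJB
    · push_neg at hcof
      obtain ⟨N, hN⟩ := hcof
      have hzero : ∀ n, N ≤ n → (∫ ω, pmi P n ω ∂Q) = 0 := fun n hn =>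
        integral_undef (hN n hn)
      have e1 : ∀ᶠ n in atTop, logPlus (∫ ω, pmi P n ω ∂Q) / Real.logb 2 (n : ℝ) = (0:ℝ) :=
        eventually_atTop.2 ⟨N, fun n hn => by
          rw [hzero n hn]
          simp [logPlus]⟩
      have e2 : ∀ᶠ k in atTop,
          logPlus (∫ ω, pmi P (2 ^ k) ω ∂Q) / Real.logb 2 ((2:ℝ) ^ k) = (0:ℝ) :=
        eventually_atTop.2 ⟨N, fun k hk => by
          rw [hzero (2 ^ k) (le_trans hk (Nat.lt_two_pow_self (n := k)).le)]
          simp [logPlus]⟩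
      constructor
      · rw [deltaPlus, limsup_congr e1, limsup_congr e2, limsup_const]
      · rw [deltaMinus, liminf_congr e1, liminf_congr e2, liminf_const]
  exact ⟨fun ω => (hgamma ω).1, fun ω => (hgamma ω).2, hdelta.1, hdelta.2⟩
end
end

section
/- For the Santa Fe process Q with parameter β ∈ (0,1): Q(X_1^n = x_1^n) = Q(K_1^n = k_1^n)·2^{−card V(k_1^n)} for x_i = (k_i, z_{k_i}), where V(k_1^n) denotes the set of distinct values occurring in the sequence k_1^n; consequently, for every n, the pointwise mutual information satisfies I^Q(n) = card(V(K_{−n+1}^0) ∩ V(K_1^n)) Q-almost surely. -/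
open MeasureTheory ProbabilityTheory Filter ENNReal

noncomputable section

variable {𝕏 : Type*}

variable [MeasurableSpace 𝕏]

/-- The real Riemann zeta function `ζ(s) = ∑_{k ≥ 1} k^{-s}` (as a sum of real powers). -/
def zetaReal (s : ℝ) : ℝ := ∑' k : ℕ, ((k : ℝ) + 1) ^ (-s)

/-- Value types of the combined family of variables `(K_i)_{i∈ℤ}` and `(Z_k)_{k∈ℕ}`. -/
def SFType : ℤ ⊕ ℕ → Type := fun j => match j with
  | Sum.inl _ => ℕ
  | Sum.inr _ => Bool

/-- Measurable-space structures on the value types. -/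
def SFTypeMeasurableSpace : ∀ j, MeasurableSpace (SFType j) := fun j => match j with
  | Sum.inl _ => (inferInstance : MeasurableSpace ℕ)
  | Sum.inr _ => (inferInstance : MeasurableSpace Bool)

/-- The combined family of random variables `(K_i)_{i∈ℤ}` and `(Z_k)_{k∈ℕ}`. -/
def SFFam {Ω' : Type*} (K : ℤ → Ω' → ℕ) (Z : ℕ → Ω' → Bool) :
    ∀ j : ℤ ⊕ ℕ, Ω' → SFType j := fun j => match j with
  | Sum.inl i => K i
  | Sum.inr k => Z k

section Core
variable {Ω' : Type*} [MeasurableSpace Ω'] {μ : Measure Ω'}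
  {K : ℤ → Ω' → ℕ} {Z : ℕ → Ω' → Bool}

lemma sf_core (hIndep : iIndepFun (m := SFTypeMeasurableSpace) (SFFam K Z) μ)
    (n : ℕ) (t : ℤ) (κ : Fin n → ℕ) (z : ℕ → Bool) (W : Finset ℕ) :
    μ ({a | ∀ i : Fin n, K (t + (i : ℕ)) a = κ i} ∩ {a | ∀ v ∈ W, Z v a = z v}) =
      (∏ i : Fin n, μ {a | K (t + (i : ℕ)) a = κ i}) * ∏ v ∈ W, μ {a | Z v a = z v} := by
  classical
  set sets : ∀ j : ℤ ⊕ ℕ, Set (SFType j) := fun j => match j with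
    | Sum.inl s => {m : ℕ | ∀ i : Fin n, t + (i : ℕ) = s → m = κ i}
    | Sum.inr v => {b : Bool | b = z v} with hsets
  set S : Finset (ℤ ⊕ ℕ) :=
    (Finset.univ.image fun i : Fin n => (Sum.inl (t + (i : ℕ)) : ℤ ⊕ ℕ)) ∪ W.image Sum.inr
    with hS
  have hmeas : ∀ j ∈ S, MeasurableSet[SFTypeMeasurableSpace j] (sets j) := by
    intro j _
    rcases j with s | v
    · exact trivial
    · exact trivial
  have key := hIndep.measure_inter_preimage_eq_mul S hmeas
  have hinj : Function.Injective fun i : Fin n => t + ((i : ℕ) : ℤ) := by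
    intro i j h
    have : (i : ℕ) = (j : ℕ) := by exact_mod_cast add_left_cancel h
    exact Fin.val_injective this
  have hpreK : ∀ i : Fin n,
      SFFam K Z (Sum.inl (t + (i : ℕ))) ⁻¹' sets (Sum.inl (t + (i : ℕ)))
        = {a | K (t + (i : ℕ)) a = κ i} := by
    intro i
    ext a
    simp only [SFFam, hsets, Set.mem_preimage, Set.mem_setOf_eq]
    constructor
    · intro h; exact h i rfl
    · intro h i' hi'
      rcases hinj hi' with rfl
      exact h
  have hpreZ : ∀ v : ℕ, SFFam K Z (Sum.inr v) ⁻¹' sets (Sum.inr v) = {a | Z v a = z v} := by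
    intro v; rfl
  have hset : (⋂ j ∈ S, SFFam K Z j ⁻¹' sets j) =
      ({a | ∀ i : Fin n, K (t + (i : ℕ)) a = κ i} ∩ {a | ∀ v ∈ W, Z v a = z v}) := by
    ext a
    simp only [Set.mem_iInter, Set.mem_inter_iff, Set.mem_setOf_eq, hS, Finset.mem_union,
      Finset.mem_image, Finset.mem_univ, true_and]
    constructor
    · intro h
      constructor
      · intro i
        have := h (Sum.inl (t + (i : ℕ))) (Or.inl ⟨i, rfl⟩)
        rw [hpreK i] at this; exact this
      · intro v hv
        have := h (Sum.inr v) (Or.inr ⟨v, hv, rfl⟩)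
        rw [hpreZ v] at this; exact this
    · rintro ⟨h1, h2⟩ j hj
      rcases hj with ⟨i, rfl⟩ | ⟨v, hv, rfl⟩
      · rw [hpreK i]; exact h1 i
      · rw [hpreZ v]; exact h2 v hv
  have hdisj : Disjoint (Finset.univ.image fun i : Fin n => (Sum.inl (t + (i : ℕ)) : ℤ ⊕ ℕ))
      (W.image Sum.inr) := by
    simp only [Finset.disjoint_left, Finset.mem_image, Finset.mem_univ, true_and]
    rintro j ⟨i, rfl⟩ ⟨v, _, h⟩
    exact absurd h (by simp)
  rw [hset] at key
  rw [key, hS, Finset.prod_union hdisj]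
  congr 1
  · rw [Finset.prod_image (fun i _ j _ h => hinj (Sum.inl.inj h))]
    exact Finset.prod_congr rfl fun i _ => by rw [hpreK i]
  · rw [Finset.prod_image (fun v _ w _ h => Sum.inr.inj h)]
    exact Finset.prod_congr rfl fun v _ => by rw [hpreZ v]

end Core

section Derived
variable {Ω' : Type*} [MeasurableSpace Ω'] {μ : Measure Ω'} [IsProbabilityMeasure μ]
  {K : ℤ → Ω' → ℕ} {Z : ℕ → Ω' → Bool}

lemma sf_K_prod (hIndep : iIndepFun (m := SFTypeMeasurableSpace) (SFFam K Z) μ)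
    (n : ℕ) (t : ℤ) (κ : Fin n → ℕ) :
    μ {a | ∀ i : Fin n, K (t + (i : ℕ)) a = κ i} =
      ∏ i : Fin n, μ {a | K (t + (i : ℕ)) a = κ i} := by
  have := sf_core hIndep n t κ (fun _ => true) ∅
  simpa using this

lemma sf_Z_half (hZm : ∀ k, Measurable (Z k)) (hZ : ∀ k : ℕ, μ {a | Z k a = true} = 1 / 2)
    (v : ℕ) (b : Bool) : μ {a | Z v a = b} = 2⁻¹ := by
  cases b
  · have hc : {a | Z v a = false} = {a | Z v a = true}ᶜ := by
      ext a; simp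
    have hm : MeasurableSet {a | Z v a = true} := (hZm v) (MeasurableSet.singleton true)
    rw [hc, measure_compl hm (measure_ne_top μ _), hZ v, measure_univ]
    rw [one_div]
    exact ENNReal.one_sub_inv_two
  · rw [hZ v, one_div]

lemma sf_block (hIndep : iIndepFun (m := SFTypeMeasurableSpace) (SFFam K Z) μ)
    (hZm : ∀ k, Measurable (Z k)) (hZ : ∀ k : ℕ, μ {a | Z k a = true} = 1 / 2)
    (n : ℕ) (t : ℤ) (κ : Fin n → ℕ) (z : ℕ → Bool) :
    μ {a | ∀ i : Fin n, K (t + (i : ℕ)) a = κ i ∧ Z (κ i) a = z (κ i)} =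
      μ {a | ∀ i : Fin n, K (t + (i : ℕ)) a = κ i} *
        (2⁻¹ : ℝ≥0∞) ^ (Finset.univ.image κ).card := by
  classical
  have hset : {a | ∀ i : Fin n, K (t + (i : ℕ)) a = κ i ∧ Z (κ i) a = z (κ i)} =
      {a | ∀ i : Fin n, K (t + (i : ℕ)) a = κ i} ∩
        {a | ∀ v ∈ Finset.univ.image κ, Z v a = z v} := by
    ext a
    simp only [Set.mem_setOf_eq, Set.mem_inter_iff, Finset.mem_image, Finset.mem_univ, true_and]
    constructor
    · intro h
      exact ⟨fun i => (h i).1, by rintro v ⟨i, rfl⟩; exact (h i).2⟩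
    · rintro ⟨h1, h2⟩ i
      exact ⟨h1 i, h2 (κ i) ⟨i, rfl⟩⟩
  rw [hset, sf_core hIndep n t κ z _, ← sf_K_prod hIndep n t κ]
  congr 1
  rw [Finset.prod_congr rfl fun v _ => sf_Z_half hZm hZ v (z v), Finset.prod_const]

end Derived

section Map
variable {Ω' : Type*} [MeasurableSpace Ω'] {μ : Measure Ω'} [IsProbabilityMeasure μ]
  {K : ℤ → Ω' → ℕ} {Z : ℕ → Ω' → Bool}

lemma sf_F_meas (hKm : ∀ i, Measurable (K i)) (hZm : ∀ k, Measurable (Z k)) :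
    Measurable (fun a => fun i : ℤ => (K i a, Z (K i a) a) : Ω' → ℤ → ℕ × Bool) := by
  refine measurable_pi_lambda _ fun i => Measurable.prodMk (hKm i) ?_
  have h : Measurable (fun p : Ω' × ℕ => Z p.2 p.1) :=
    measurable_from_prod_countable_left fun m => hZm m
  exact h.comp (Measurable.prodMk measurable_id (hKm i))

lemma sf_blockPos_set_meas (n : ℕ) (x : Fin n → ℕ × Bool) :
    MeasurableSet {ω : ℤ → ℕ × Bool | blockPos n ω = x} := by
  have : {ω : ℤ → ℕ × Bool | blockPos n ω = x} =
      ⋂ i : Fin n, (fun ω : ℤ → ℕ × Bool => ω (1 + (i : ℕ))) ⁻¹' {x i} := by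
    ext ω
    simp only [Set.mem_setOf_eq, Set.mem_iInter, Set.mem_preimage, Set.mem_singleton_iff]
    exact ⟨fun h i => congrFun h i, fun h => funext h⟩
  rw [this]
  exact MeasurableSet.iInter fun i => measurable_pi_apply _ (MeasurableSet.singleton _)

lemma sf_Q_block {Q : Measure (ℤ → ℕ × Bool)}
    (hQ : Q = μ.map (fun a => fun i : ℤ => (K i a, Z (K i a) a)))
    (hKm : ∀ i, Measurable (K i)) (hZm : ∀ k, Measurable (Z k))
    (n : ℕ) (κ : Fin n → ℕ) (z : ℕ → Bool) :
    Q {ω | blockPos n ω = fun i => (κ i, z (κ i))} =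
      μ {a | ∀ i : Fin n, K (1 + (i : ℕ)) a = κ i ∧ Z (κ i) a = z (κ i)} := by
  rw [hQ, Measure.map_apply (sf_F_meas hKm hZm) (sf_blockPos_set_meas n _)]
  congr 1
  ext a
  simp only [Set.mem_preimage, Set.mem_setOf_eq, blockPos]
  constructor
  · intro h i
    have h' := congrFun h i
    rw [Prod.ext_iff] at h'
    exact ⟨h'.1, ((congrArg (fun m => Z m a) h'.1).symm.trans h'.2 : _)⟩
  · intro h
    funext i
    obtain ⟨h1, h2⟩ := h i
    rw [Prod.ext_iff]
    exact ⟨h1, ((congrArg (fun m => Z m a) h1).trans h2 : _)⟩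

end Map

lemma zetaReal_pos {s : ℝ} (hs : 1 < s) : 0 < zetaReal s := by
  have hsum : Summable (fun k : ℕ => ((k : ℝ) + 1) ^ (-s)) := by
    have h1 : Summable (fun n : ℕ => (n : ℝ) ^ (-s)) :=
      Real.summable_nat_rpow.mpr (by linarith)
    have h2 := (summable_nat_add_iff 1).mpr h1
    refine h2.congr fun k => ?_
    push_cast
    ring_nf
  refine Summable.tsum_pos hsum (fun k => ?_) 0 ?_
  · positivity
  · positivity

section Values
variable {Ω' : Type*} [MeasurableSpace Ω'] {μ : Measure Ω'} [IsProbabilityMeasure μ]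
  {K : ℤ → Ω' → ℕ} {Z : ℕ → Ω' → Bool} {β : ℝ}

/-- The single-symbol probability. -/
def sfP (β : ℝ) (m : ℕ) : ℝ := (m : ℝ) ^ (-β⁻¹) / zetaReal β⁻¹

lemma sfP_pos (hβ : β ∈ Set.Ioo (0 : ℝ) 1) {m : ℕ} (hm : 1 ≤ m) : 0 < sfP β m := by
  have h1 : (1 : ℝ) < β⁻¹ := (one_lt_inv₀ hβ.1).mpr hβ.2
  have hz := zetaReal_pos h1
  have hm' : (0 : ℝ) < m := by exact_mod_cast hm
  exact div_pos (Real.rpow_pos_of_pos hm' _) hz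

lemma sf_Qval {Q : Measure (ℤ → ℕ × Bool)}
    (hβ : β ∈ Set.Ioo (0 : ℝ) 1)
    (hQ : Q = μ.map (fun a => fun i : ℤ => (K i a, Z (K i a) a)))
    (hKm : ∀ i, Measurable (K i)) (hZm : ∀ k, Measurable (Z k))
    (hIndep : iIndepFun (m := SFTypeMeasurableSpace) (SFFam K Z) μ)
    (hK : ∀ (i : ℤ) (k : ℕ), 1 ≤ k →
      μ {a | K i a = k} = ENNReal.ofReal ((k : ℝ) ^ (-β⁻¹) / zetaReal β⁻¹))
    (hZ : ∀ k : ℕ, μ {a | Z k a = true} = 1 / 2)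
    (n : ℕ) (κ : Fin n → ℕ) (hκ : ∀ i, 1 ≤ κ i) (z : ℕ → Bool) :
    measureCode Q n (fun i => (κ i, z (κ i))) =
      (∏ i : Fin n, sfP β (κ i)) * (2⁻¹ : ℝ) ^ (Finset.univ.image κ).card := by
  rw [measureCode, sf_Q_block hQ hKm hZm n κ z, sf_block hIndep hZm hZ n 1 κ z,
    sf_K_prod hIndep n 1 κ]
  rw [Finset.prod_congr rfl fun (i : Fin n) _ => hK (1 + (i : ℕ)) (κ i) (hκ i)]
  rw [ENNReal.toReal_mul, ENNReal.toReal_pow, ENNReal.toReal_inv]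
  rw [ENNReal.toReal_prod]
  have hnn : ∀ i : Fin n, (0 : ℝ) ≤ (κ i : ℝ) ^ (-β⁻¹) / zetaReal β⁻¹ :=
    fun i => (sfP_pos hβ (hκ i)).le
  rw [Finset.prod_congr rfl fun (i : Fin n) _ => ENNReal.toReal_ofReal (hnn i)]
  norm_num [sfP]

lemma sf_logQval {Q : Measure (ℤ → ℕ × Bool)}
    (hβ : β ∈ Set.Ioo (0 : ℝ) 1)
    (hQ : Q = μ.map (fun a => fun i : ℤ => (K i a, Z (K i a) a)))
    (hKm : ∀ i, Measurable (K i)) (hZm : ∀ k, Measurable (Z k))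
    (hIndep : iIndepFun (m := SFTypeMeasurableSpace) (SFFam K Z) μ)
    (hK : ∀ (i : ℤ) (k : ℕ), 1 ≤ k →
      μ {a | K i a = k} = ENNReal.ofReal ((k : ℝ) ^ (-β⁻¹) / zetaReal β⁻¹))
    (hZ : ∀ k : ℕ, μ {a | Z k a = true} = 1 / 2)
    (n : ℕ) (κ : Fin n → ℕ) (hκ : ∀ i, 1 ≤ κ i) (z : ℕ → Bool) :
    Real.logb 2 (measureCode Q n (fun i => (κ i, z (κ i)))) =
      (∑ i : Fin n, Real.logb 2 (sfP β (κ i))) - (Finset.univ.image κ).card := by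
  rw [sf_Qval hβ hQ hKm hZm hIndep hK hZ n κ hκ z]
  have hprodpos : (0 : ℝ) < ∏ i : Fin n, sfP β (κ i) :=
    Finset.prod_pos fun i _ => sfP_pos hβ (hκ i)
  rw [Real.logb_mul hprodpos.ne' (by positivity),
    Real.logb_prod _ _ fun i _ => (sfP_pos hβ (hκ i)).ne',
    Real.logb_pow, Real.logb_inv, Real.logb_self_eq_one (by norm_num : (1:ℝ) < 2)]
  ring

end Values

lemma sf_sum_both (f : ℤ → ℝ) (n : ℕ) :
    ∑ i : Fin (2 * n), f (-(n : ℤ) + 1 + (i : ℕ)) =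
      (∑ i : Fin n, f (-(n : ℤ) + 1 + (i : ℕ))) + ∑ i : Fin n, f (1 + (i : ℕ)) := by
  rw [Fin.sum_univ_eq_sum_range (fun j => f (-(n : ℤ) + 1 + (j : ℕ))),
    Fin.sum_univ_eq_sum_range (fun j => f (-(n : ℤ) + 1 + (j : ℕ))),
    Fin.sum_univ_eq_sum_range (fun j => f (1 + (j : ℕ))), two_mul,
    Finset.sum_range_add]
  congr 1
  refine Finset.sum_congr rfl fun j _ => ?_
  congr 1
  push_cast
  ring

lemma sf_image_both (g : ℤ → ℕ) (n : ℕ) :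
    Finset.univ.image (fun i : Fin (2 * n) => g (-(n : ℤ) + 1 + (i : ℕ))) =
      Finset.univ.image (fun i : Fin n => g (-(n : ℤ) + 1 + (i : ℕ))) ∪
        Finset.univ.image (fun i : Fin n => g (1 + (i : ℕ))) := by
  ext m
  simp only [Finset.mem_image, Finset.mem_union, Finset.mem_univ, true_and]
  constructor
  · rintro ⟨i, rfl⟩
    by_cases h : (i : ℕ) < n
    · exact Or.inl ⟨⟨(i : ℕ), h⟩, rfl⟩
    · refine Or.inr ⟨⟨(i : ℕ) - n, by omega⟩, ?_⟩
      have hin : (i : ℕ) < 2 * n := i.isLt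
      congr 1
      push_cast [Nat.cast_sub (by omega : n ≤ (i : ℕ))]
      ring
  · rintro (⟨i, rfl⟩ | ⟨i, rfl⟩)
    · exact ⟨⟨(i : ℕ), by omega⟩, rfl⟩
    · refine ⟨⟨n + (i : ℕ), by omega⟩, ?_⟩
      congr 1
      push_cast
      ring

lemma sf_target_meas (Q : Measure (ℤ → ℕ × Bool)) (n : ℕ) :
    MeasurableSet {ω : ℤ → ℕ × Bool | pmi (measureCode Q) n ω =
      ((((Finset.univ.image fun i : Fin n => (blockNeg n ω i).1) ∩
          (Finset.univ.image fun i : Fin n => (blockPos n ω i).1)).card : ℕ) : ℝ)} := by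
  have hbn : Measurable (fun ω : ℤ → ℕ × Bool => blockNeg n ω) :=
    measurable_pi_lambda _ fun i => measurable_pi_apply _
  have hbp : Measurable (fun ω : ℤ → ℕ × Bool => blockPos n ω) :=
    measurable_pi_lambda _ fun i => measurable_pi_apply _
  have hbb : Measurable (fun ω : ℤ → ℕ × Bool => blockBoth n ω) :=
    measurable_pi_lambda _ fun i => measurable_pi_apply _
  have h1 : Measurable (pmi (measureCode Q) n) := by
    unfold pmi
    exact (((measurable_of_countable (fun y => Real.logb 2 (measureCode Q n y))).comp
        hbn).neg.sub ((measurable_of_countable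
        (fun y => Real.logb 2 (measureCode Q n y))).comp hbp)).add
      ((measurable_of_countable (fun y => Real.logb 2 (measureCode Q (2 * n) y))).comp hbb)
  have h2 : Measurable (fun ω : ℤ → ℕ × Bool =>
      ((((Finset.univ.image fun i : Fin n => (blockNeg n ω i).1) ∩
          (Finset.univ.image fun i : Fin n => (blockPos n ω i).1)).card : ℕ) : ℝ)) := by
    have : (fun ω : ℤ → ℕ × Bool =>
        ((((Finset.univ.image fun i : Fin n => (blockNeg n ω i).1) ∩
            (Finset.univ.image fun i : Fin n => (blockPos n ω i).1)).card : ℕ) : ℝ)) =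
        (fun p : (Fin n → ℕ × Bool) × (Fin n → ℕ × Bool) =>
          ((((Finset.univ.image fun i : Fin n => (p.1 i).1) ∩
              (Finset.univ.image fun i : Fin n => (p.2 i).1)).card : ℕ) : ℝ)) ∘
          (fun ω => (blockNeg n ω, blockPos n ω)) := rfl
    rw [this]
    exact (measurable_of_countable _).comp (hbn.prodMk hbp)
  exact measurableSet_eq_fun h1 h2

section Final
variable {Ω' : Type*} [MeasurableSpace Ω'] {μ : Measure Ω'} [IsProbabilityMeasure μ]
  {K : ℤ → Ω' → ℕ} {Z : ℕ → Ω' → Bool} {β : ℝ}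

lemma sf_logQval2 {Q : Measure (ℤ → ℕ × Bool)}
    (hβ : β ∈ Set.Ioo (0 : ℝ) 1)
    (hQ : Q = μ.map (fun a => fun i : ℤ => (K i a, Z (K i a) a)))
    (hKm : ∀ i, Measurable (K i)) (hZm : ∀ k, Measurable (Z k))
    (hIndep : iIndepFun (m := SFTypeMeasurableSpace) (SFFam K Z) μ)
    (hK : ∀ (i : ℤ) (k : ℕ), 1 ≤ k →
      μ {a | K i a = k} = ENNReal.ofReal ((k : ℝ) ^ (-β⁻¹) / zetaReal β⁻¹))
    (hZ : ∀ k : ℕ, μ {a | Z k a = true} = 1 / 2)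
    (n : ℕ) (x : Fin n → ℕ × Bool) (κ : Fin n → ℕ) (hκ : ∀ i, 1 ≤ κ i) (z : ℕ → Bool)
    (hx : x = fun i => (κ i, z (κ i))) :
    Real.logb 2 (measureCode Q n x) =
      (∑ i : Fin n, Real.logb 2 (sfP β (κ i))) - ((Finset.univ.image κ).card : ℝ) := by
  subst hx
  exact sf_logQval hβ hQ hKm hZm hIndep hK hZ n κ hκ z

end Final

/-- For the Santa Fe process `Q` with parameter `β ∈ (0,1)`:
`Q(X_1^n = x_1^n) = Q(K_1^n = k_1^n) · 2^{-card V(k_1^n)}` for `x_i = (k_i, z_{k_i})`,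
where `V(k_1^n)` is the set of distinct values in `k_1^n`; consequently
`I^Q(n) = card (V(K_{-n+1}^0) ∩ V(K_1^n))` `Q`-almost surely. -/
theorem santaFe_mutual_information {Ω' : Type*} [MeasurableSpace Ω'] (μ : Measure Ω')
    [IsProbabilityMeasure μ] (β : ℝ) (hβ : β ∈ Set.Ioo (0 : ℝ) 1)
    (K : ℤ → Ω' → ℕ) (Z : ℕ → Ω' → Bool)
    (hKm : ∀ i, Measurable (K i)) (hZm : ∀ k, Measurable (Z k))
    (hIndep : iIndepFun (m := SFTypeMeasurableSpace) (SFFam K Z) μ)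
    (hK0 : ∀ i : ℤ, μ {a | K i a = 0} = 0)
    (hK : ∀ (i : ℤ) (k : ℕ), 1 ≤ k →
      μ {a | K i a = k} = ENNReal.ofReal ((k : ℝ) ^ (-β⁻¹) / zetaReal β⁻¹))
    (hZ : ∀ k : ℕ, μ {a | Z k a = true} = 1 / 2)
    (Q : Measure (ℤ → ℕ × Bool))
    (hQ : Q = μ.map (fun a => fun i : ℤ => (K i a, Z (K i a) a))) :
    (∀ n : ℕ, 1 ≤ n → ∀ (k : Fin n → ℕ) (z : ℕ → Bool),
      Q {ω | blockPos n ω = fun i => (k i, z (k i))} =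
        μ {a | ∀ i : Fin n, K (1 + (i : ℕ)) a = k i} *
          (2⁻¹ : ℝ≥0∞) ^ (Finset.univ.image k).card) ∧
    (∀ n : ℕ, 1 ≤ n → ∀ᵐ ω ∂Q,
      pmi (measureCode Q) n ω =
        ((Finset.univ.image fun i : Fin n => (blockNeg n ω i).1) ∩
          (Finset.univ.image fun i : Fin n => (blockPos n ω i).1)).card) := by
  constructor
  · intro n hn k z
    rw [sf_Q_block hQ hKm hZm n k z, sf_block hIndep hZm hZ n 1 k z]
  · intro n hn
    rw [hQ, MeasureTheory.ae_map_iff (sf_F_meas hKm hZm).aemeasurable (sf_target_meas _ n)]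
    have hae : ∀ᵐ a ∂μ, ∀ j : ℤ, K j a ≠ 0 := by
      rw [ae_all_iff]
      intro j
      exact (MeasureTheory.measure_eq_zero_iff_ae_notMem).mp (hK0 j)
    filter_upwards [hae] with a ha
    have h1le : ∀ j : ℤ, 1 ≤ K j a := fun j => Nat.one_le_iff_ne_zero.mpr (ha j)
    set Q' : Measure (ℤ → ℕ × Bool) := μ.map (fun a => fun i : ℤ => (K i a, Z (K i a) a))
      with hQ'
    set ω' : ℤ → ℕ × Bool := fun i : ℤ => (K i a, Z (K i a) a) with hω'
    set κn : Fin n → ℕ := fun i => K (-(n : ℤ) + 1 + (i : ℕ)) a with hκn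
    set κp : Fin n → ℕ := fun i => K (1 + (i : ℕ)) a with hκp
    set κb : Fin (2 * n) → ℕ := fun i => K (-(n : ℤ) + 1 + (i : ℕ)) a with hκb
    have e1 : Real.logb 2 (measureCode Q' n (blockNeg n ω')) =
        (∑ i : Fin n, Real.logb 2 (sfP β (κn i))) - ((Finset.univ.image κn).card : ℝ) :=
      sf_logQval2 hβ hQ' hKm hZm hIndep hK hZ n _ κn (fun i => h1le _) (fun m => Z m a) rfl
    have e2 : Real.logb 2 (measureCode Q' n (blockPos n ω')) =
        (∑ i : Fin n, Real.logb 2 (sfP β (κp i))) - ((Finset.univ.image κp).card : ℝ) :=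
      sf_logQval2 hβ hQ' hKm hZm hIndep hK hZ n _ κp (fun i => h1le _) (fun m => Z m a) rfl
    have e3 : Real.logb 2 (measureCode Q' (2 * n) (blockBoth n ω')) =
        (∑ i : Fin (2 * n), Real.logb 2 (sfP β (κb i))) -
          ((Finset.univ.image κb).card : ℝ) :=
      sf_logQval2 hβ hQ' hKm hZm hIndep hK hZ (2 * n) _ κb (fun i => h1le _)
        (fun m => Z m a) rfl
    have hs : (∑ i : Fin (2 * n), Real.logb 2 (sfP β (κb i))) =
        (∑ i : Fin n, Real.logb 2 (sfP β (κn i))) +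
          ∑ i : Fin n, Real.logb 2 (sfP β (κp i)) :=
      sf_sum_both (fun j => Real.logb 2 (sfP β (K j a))) n
    have himg : Finset.univ.image κb = Finset.univ.image κn ∪ Finset.univ.image κp :=
      sf_image_both (fun j => K j a) n
    have hcard : (Finset.univ.image κn ∩ Finset.univ.image κp).card +
        (Finset.univ.image κb).card =
        (Finset.univ.image κn).card + (Finset.univ.image κp).card := by
      rw [himg]
      exact Finset.card_inter_add_card_union _ _
    have hrn : (Finset.univ.image fun i : Fin n => (blockNeg n ω' i).1) =
        Finset.univ.image κn := rfl
    have hrp : (Finset.univ.image fun i : Fin n => (blockPos n ω' i).1) =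
        Finset.univ.image κp := rfl
    show pmi (measureCode Q') n ω' = _
    unfold pmi
    rw [e1, e2, e3, hs, hrn, hrp]
    have hc' : ((Finset.univ.image κn ∩ Finset.univ.image κp).card : ℝ) +
        ((Finset.univ.image κb).card : ℝ) =
        ((Finset.univ.image κn).card : ℝ) + ((Finset.univ.image κp).card : ℝ) := by
      exact_mod_cast hcard
    linarith
end
end
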